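/- There is a constant c_d > 0, depending only on the dimension d, with the following property: whenever Ω ⊂ ℝ^d and r > 0 satisfy Ω = ∪_{x∈Ω′} B̄(x, t_x) for some Ω′ ⊆ Ω and radii t_x ≥ r for all x ∈ Ω′, then for every z ∈ Ω the Lebesgue measure of Ω ∩ B̄(z, r/3) is at least c_d r^d. -/

import Mathlib

open Set Metric MeasureTheory

/-- There is a constant `c_d > 0` depending only on the dimension `d`
such that whenever `Ω ⊆ ℝ^d` is a union `Ω = ⋃_{x ∈ Ω'} B̄(x, t_x)` of closed balls
with centers `Ω' ⊆ Ω` and radii `t_x ≥ r > 0`, then for every `z ∈ Ω` the Lebesgue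
measure of `Ω ∩ B̄(z, r/3)` is at least `c_d·r^d`. -/
theorem stmt18 (d : ℕ) (hd : 1 ≤ d) :
    ∃ c : ℝ, 0 < c ∧
      ∀ (Ω Ω' : Set (EuclideanSpace ℝ (Fin d))) (t : EuclideanSpace ℝ (Fin d) → ℝ)
        (r : ℝ), 0 < r → Ω' ⊆ Ω → (∀ x ∈ Ω', r ≤ t x) →
        Ω = ⋃ x ∈ Ω', closedBall x (t x) →
        ∀ z ∈ Ω, ENNReal.ofReal (c * r ^ d) ≤ volume (Ω ∩ closedBall z (r / 3)) := by
  set V := volume (closedBall (0 : EuclideanSpace ℝ (Fin d)) 1) with hV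
  have hVpos : 0 < V := measure_closedBall_pos volume 0 one_pos
  have hVlt : V < ⊤ := measure_closedBall_lt_top
  have hVtR : 0 < V.toReal := ENNReal.toReal_pos hVpos.ne' hVlt.ne
  refine ⟨(1/6)^d * V.toReal, by positivity, ?_⟩
  intro Ω Ω' t r hr hsub ht hΩ z hz
  obtain ⟨x, hx, hzx⟩ : ∃ x ∈ Ω', z ∈ closedBall x (t x) := by
    rw [hΩ] at hz; simpa using hz
  have hDle : dist z x ≤ t x := mem_closedBall.1 hzx
  have hrt : r ≤ t x := ht x hx
  obtain ⟨y, hy1, hy2⟩ : ∃ y, closedBall y (r/6) ⊆ closedBall x (t x) ∧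
      closedBall y (r/6) ⊆ closedBall z (r/3) := by
    rcases le_or_gt (dist z x) (r/6) with hle | hgt
    · exact ⟨x, closedBall_subset_closedBall (by linarith),
        closedBall_subset_closedBall' (by rw [dist_comm]; linarith)⟩
    · set D := dist z x with hD
      have hDpos : 0 < D := by linarith
      set c := (r/6)/D with hc
      have hcD : c * D = r/6 := div_mul_cancel₀ _ hDpos.ne'
      have hc1 : c < 1 := (div_lt_one hDpos).2 hgt
      have hc0 : 0 ≤ c := by positivity
      have hnorm : ‖x - z‖ = D := by rw [← dist_eq_norm, dist_comm]
      refine ⟨z + c • (x - z), ?_, ?_⟩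
      · apply closedBall_subset_closedBall'
        have h1 : z + c • (x - z) - x = (c - 1) • (x - z) := by module
        have h2 : dist (z + c • (x - z)) x = D - r/6 := by
          rw [dist_eq_norm, h1, norm_smul, Real.norm_eq_abs,
            abs_of_nonpos (by linarith), hnorm]
          nlinarith
        rw [h2]; linarith
      · apply closedBall_subset_closedBall'
        have h1 : z + c • (x - z) - z = c • (x - z) := add_sub_cancel_left _ _
        have h2 : dist (z + c • (x - z)) z = r/6 := by
          rw [dist_eq_norm, h1, norm_smul, Real.norm_eq_abs, abs_of_nonneg hc0,
            hnorm, hcD]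
        rw [h2]; linarith
  have hsubset : closedBall y (r/6) ⊆ Ω ∩ closedBall z (r/3) := by
    intro p hp
    exact ⟨hΩ ▸ mem_biUnion hx (hy1 hp), hy2 hp⟩
  have hball : volume (closedBall y (r/6)) = ENNReal.ofReal ((r/6)^d) * V := by
    rw [Measure.addHaar_closedBall' volume y (by positivity : (0:ℝ) ≤ r/6)]
    simp [finrank_euclideanSpace_fin, hV]
  calc ENNReal.ofReal ((1/6)^d * V.toReal * r^d)
      = ENNReal.ofReal ((r/6)^d * V.toReal) := by ring_nf
    _ = ENNReal.ofReal ((r/6)^d) * V := by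
        rw [ENNReal.ofReal_mul (by positivity), ENNReal.ofReal_toReal hVlt.ne]
    _ = volume (closedBall y (r/6)) := hball.symm
    _ ≤ volume (Ω ∩ closedBall z (r/3)) := measure_mono hsubset
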